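/- For all positive integers g and m, there exists an (m·g)-regular placement delivery array with parameters ( m(⌈g²/2⌉+g), (⌈g²/2⌉+g)^m, ⌈g²/2⌉·(⌈g²/2⌉+g)^{m−1}, (⌈g²/2⌉+g)^m ). -/

import Mathlib

set_option linter.unusedSectionVars false
set_option linter.unusedVariables false
set_option linter.unusedTactic false
set_option maxHeartbeats 1000000
open Finset Function



/-- A `(K,F,Z,S)` placement delivery array: an `F × K` array whose entries are either `*`
(encoded as `none`) or integers in `[1:S]` (encoded as `some s` with `s : Fin S`). -/
def IsPDA (K F Z S : ℕ) (P : Fin F → Fin K → Option (Fin S)) : Prop :=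
  (∀ k : Fin K, (Finset.univ.filter fun j : Fin F => P j k = none).card = Z) ∧
  (∀ s : Fin S, ∃ (j : Fin F) (k : Fin K), P j k = some s) ∧
  (∀ (j1 j2 : Fin F) (k1 k2 : Fin K) (s : Fin S),
      P j1 k1 = some s → P j2 k2 = some s → (j1, k1) ≠ (j2, k2) →
      P j1 k2 = none ∧ P j2 k1 = none)

/-- A PDA is `g`-regular if each integer appears exactly `g` times. -/
def PDARegular (K F S g : ℕ) (P : Fin F → Fin K → Option (Fin S)) : Prop :=
  ∀ s : Fin S,
    (Finset.univ.filter fun jk : Fin F × Fin K => P jk.1 jk.2 = some s).card = g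

/-- Row `i` is a star row for the integer `s`. -/
def PDAStarRow (K F S : ℕ) (P : Fin F → Fin K → Option (Fin S)) (i : Fin F) (s : Fin S) : Prop :=
  ∀ (j : Fin F) (k : Fin K), P j k = some s → P i k = none

/-- Condition 1 with parameter `lam`. -/
def PDACondition1 (K F Z S lam : ℕ) (P : Fin F → Fin K → Option (Fin S)) : Prop :=
  lam ∣ F ∧ lam ∣ Z ∧
  (∀ (j : Fin F) (k : Fin K),
      P j k = none ↔
        P ⟨j.val % (F / lam), Nat.lt_of_le_of_lt (Nat.mod_le _ _) j.isLt⟩ k = none) ∧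
  ∃ φ : Fin S → Fin (F / lam),
    (∀ s : Fin S, PDAStarRow K F S P (Fin.castLE (Nat.div_le_self F lam) (φ s)) s) ∧
    (∀ j : Fin (F / lam), (Finset.univ.filter fun s : Fin S => φ s = j).card * F = lam * S)

/-- Condition 2: every row contains the same number of stars. -/
def PDACondition2 (K F S : ℕ) (P : Fin F → Fin K → Option (Fin S)) : Prop :=
  ∀ j1 j2 : Fin F,
    (Finset.univ.filter fun k : Fin K => P j1 k = none).card =
    (Finset.univ.filter fun k : Fin K => P j2 k = none).card



def stf : ℕ → ℕ → ℕ
  | 0, _ => 0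
  | _ + 1, 0 => 0
  | f + 1, n + 1 => 3 * stf f ((n + 1) / 2) + (n + 1) % 2
def st (n : ℕ) : ℕ := stf n n
lemma stf_zero (f : ℕ) : stf f 0 = 0 := by cases f <;> rfl
lemma stf_congr : ∀ n f₁ f₂, n ≤ f₁ → n ≤ f₂ → stf f₁ n = stf f₂ n := by
  intro n
  induction n using Nat.strong_induction_on with
  | _ n ih =>
    intro f₁ f₂ h₁ h₂
    match n, f₁, f₂, h₁, h₂ with
    | 0, f₁, f₂, _, _ => rw [stf_zero, stf_zero]
    | n + 1, f₁ + 1, f₂ + 1, h₁, h₂ =>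
      show 3 * stf f₁ ((n+1)/2) + (n+1) % 2 = 3 * stf f₂ ((n+1)/2) + (n+1) % 2
      rw [ih ((n+1)/2) (by omega) f₁ f₂ (by omega) (by omega)]
lemma st_unfold (n : ℕ) : st n = 3 * st (n / 2) + n % 2 := by
  match n with
  | 0 => rfl
  | n + 1 =>
    show stf (n+1) (n+1) = _
    show 3 * stf n ((n+1)/2) + (n+1) % 2 = _
    rw [stf_congr ((n+1)/2) n ((n+1)/2) (by omega) le_rfl]
    rfl

lemma st_midpoint : ∀ N a b c, a + b ≤ N → st a + st b = 2 * st c → a = b := by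
  intro N
  induction N with
  | zero => intro a b c h _; omega
  | succ N ih =>
    intro a b c hab h
    rcases Nat.eq_zero_or_pos (a + b) with h0 | h0
    · omega
    have ha := st_unfold a
    have hb := st_unfold b
    have hc := st_unfold c
    rcases Nat.mod_two_eq_zero_or_one a with pa | pa <;>
      rcases Nat.mod_two_eq_zero_or_one b with pb | pb <;>
        rcases Nat.mod_two_eq_zero_or_one c with pc | pc <;>
    · have key : st (a / 2) + st (b / 2) = 2 * st (c / 2) := by omega
      have := ih (a / 2) (b / 2) (c / 2) (by omega) key
      omega

lemma st_lt_succ : ∀ n, st n < st (n + 1) := by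
  intro n
  induction n using Nat.strong_induction_on with
  | _ n ih =>
    rcases Nat.even_or_odd n with ⟨k, hk⟩ | ⟨k, hk⟩
    · have h1 := st_unfold n
      have h2 := st_unfold (n + 1)
      have e1 : n / 2 = k := by omega
      have e2 : (n + 1) / 2 = k := by omega
      rw [e1] at h1; rw [e2] at h2; omega
    · have h1 := st_unfold n
      have h2 := st_unfold (n + 1)
      have e1 : n / 2 = k := by omega
      have e2 : (n + 1) / 2 = k + 1 := by omega
      rw [e1] at h1; rw [e2] at h2
      have := ih k (by omega)
      omega

lemma st_strictMono : StrictMono st := strictMono_nat_of_lt_succ st_lt_succ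

lemma st_bound : ∀ n, 32 ≤ n → 4 * st n ≤ n * n := by
  intro n
  induction n using Nat.strong_induction_on with
  | _ n ih =>
    intro h32
    by_cases h64 : n < 64
    · have hsmall : ∀ m < 64, 32 ≤ m → 4 * st m ≤ m * m := by decide
      exact hsmall n h64 h32
    · have h := st_unfold n
      have hk := ih (n / 2) (by omega) (by omega)
      have hn : 2 * (n / 2) ≤ n := by omega
      have h32' : 32 ≤ n / 2 := by omega
      have h1 : 4 * ((n/2)*(n/2)) ≤ n * n := by
        calc 4 * ((n/2)*(n/2)) = (2*(n/2)) * (2*(n/2)) := by ring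
        _ ≤ n * n := Nat.mul_le_mul hn hn
      have h2 : 32 * 32 ≤ (n/2)*(n/2) := Nat.mul_le_mul h32' h32'
      have h3 : n % 2 ≤ 1 := by omega
      linarith


lemma key_bound (g : ℕ) (h4 : 4 ≤ g) (h5 : g ≠ 5) (h9 : g ≠ 9) (h17 : g ≠ 17) :
    2 * (st (g - 1) + 1) ≤ (g ^ 2 + 1) / 2 + g - 1 := by
  by_cases h33 : g < 33
  · have hdec : ∀ g < 33, 4 ≤ g → g ≠ 5 → g ≠ 9 → g ≠ 17 →
        2 * (st (g - 1) + 1) ≤ (g ^ 2 + 1) / 2 + g - 1 := by decide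
    exact hdec g h33 h4 h5 h9 h17
  · obtain ⟨n, rfl⟩ : ∃ n, g = n + 1 := ⟨g - 1, by omega⟩
    have hb := st_bound n (by omega)
    have hsq : (n + 1) ^ 2 = n * n + 2 * n + 1 := by ring
    simp only [Nat.add_sub_cancel]
    omega

def BaseGood (g q : ℕ) (r c : Fin g → ZMod q) : Prop :=
  Function.Injective r ∧ Function.Injective c ∧ (∀ i, r i ≠ 0) ∧
  Function.Injective (fun i => r i - c i) ∧
  (∀ i j k, r i - c j = r k - c k → i = j) ∧
  (∀ i j, (0 : ZMod q) - c i ≠ r j - c j)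

instance (g q : ℕ) (r c : Fin g → ZMod q) : Decidable (BaseGood g q r c) := by
  unfold BaseGood; infer_instance

lemma exists_base (g : ℕ) (hg : 0 < g) :
    ∃ r c : Fin g → ZMod ((g ^ 2 + 1) / 2 + g), BaseGood g ((g ^ 2 + 1) / 2 + g) r c := by
  by_cases e1 : g = 1
  · subst e1; exact ⟨![1], ![0], by decide⟩
  by_cases e2 : g = 2
  · subst e2; exact ⟨![1, 3], ![0, 1], by decide⟩
  by_cases e3 : g = 3
  · subst e3; exact ⟨![1, 2, 4], ![0, 4, 5], by decide⟩
  by_cases e5 : g = 5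
  · subst e5; exact ⟨![1, 2, 3, 4, 6], ![0, 4, 9, 15, 16], by decide⟩
  by_cases e9 : g = 9
  · subst e9
    exact ⟨![2, 4, 8, 10, 20, 24, 18, 28, 32], ![1, 2, 4, 5, 10, 12, 34, 39, 41], by decide⟩
  by_cases e17 : g = 17
  · subst e17
    exact ⟨![2, 4, 8, 10, 20, 22, 26, 28, 56, 58, 62, 64, 74, 76, 80, 136, 154],
      ![1, 2, 4, 5, 10, 11, 13, 14, 28, 29, 31, 32, 37, 38, 40, 68, 77], by decide⟩
  -- generic case
  set q := (g ^ 2 + 1) / 2 + g with hqdef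
  have hkey : 2 * (st (g - 1) + 1) ≤ q - 1 := key_bound g (by omega) e5 e9 e17
  have hq1 : 1 ≤ q := by omega
  haveI : NeZero q := ⟨by omega⟩
  have hA : ∀ i : Fin g, 2 * (st i.val + 1) ≤ q - 1 := by
    intro i
    have : st i.val ≤ st (g - 1) := st_strictMono.monotone (by omega)
    omega
  refine ⟨fun i => ((2 * (st i.val + 1) : ℕ) : ZMod q),
          fun i => (((st i.val + 1) : ℕ) : ZMod q), ?_⟩
  have castinj : ∀ x y : ℕ, x < q → y < q → (x : ZMod q) = (y : ZMod q) → x = y := by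
    intro x y hx hy h
    have h1 := ZMod.val_cast_of_lt hx
    have h2 := ZMod.val_cast_of_lt hy
    rw [h] at h1; omega
  have stinj : ∀ i j : Fin g, st i.val = st j.val → i = j := by
    intro i j h
    exact Fin.ext (st_strictMono.injective h)
  have intzero : ∀ x : ℤ, ((x : ZMod q) = 0) → |x| < q → x = 0 := by
    intro x h hlt
    exact Int.eq_zero_of_abs_lt_dvd ((ZMod.intCast_zmod_eq_zero_iff_dvd x q).mp h)
      (by exact_mod_cast hlt)
  have hrc : ∀ i : Fin g, ((2 * (st i.val + 1) : ℕ) : ZMod q) - (((st i.val + 1) : ℕ) : ZMod q)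
      = (((st i.val + 1) : ℕ) : ZMod q) := by
    intro i; push_cast; ring
  refine ⟨?_, ?_, ?_, ?_, ?_, ?_⟩
  · -- r injective
    intro i j h
    replace h : ((2 * (st i.val + 1) : ℕ) : ZMod q) = ((2 * (st j.val + 1) : ℕ) : ZMod q) := h
    have hi := hA i; have hj := hA j
    have := castinj _ _ (by omega) (by omega) h
    exact stinj i j (by omega)
  · -- c injective
    intro i j h
    replace h : (((st i.val + 1) : ℕ) : ZMod q) = (((st j.val + 1) : ℕ) : ZMod q) := h
    have hi := hA i; have hj := hA j
    have := castinj _ _ (by omega) (by omega) h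
    exact stinj i j (by omega)
  · -- r ≠ 0
    intro i h
    replace h : ((2 * (st i.val + 1) : ℕ) : ZMod q) = 0 := h
    have hdvd := (ZMod.natCast_eq_zero_iff (2 * (st i.val + 1)) q).mp h
    have h2 := Nat.le_of_dvd (by omega) hdvd
    have := hA i; omega
  · -- d injective
    intro i j h
    replace h : ((2 * (st i.val + 1) : ℕ) : ZMod q) - (((st i.val + 1) : ℕ) : ZMod q)
        = ((2 * (st j.val + 1) : ℕ) : ZMod q) - (((st j.val + 1) : ℕ) : ZMod q) := h
    rw [hrc i, hrc j] at h
    have hi := hA i; have hj := hA j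
    have := castinj _ _ (by omega) (by omega) h
    exact stinj i j (by omega)
  · -- main condition
    intro i j k h
    replace h : ((2 * (st i.val + 1) : ℕ) : ZMod q) - (((st j.val + 1) : ℕ) : ZMod q)
        = ((2 * (st k.val + 1) : ℕ) : ZMod q) - (((st k.val + 1) : ℕ) : ZMod q) := h
    rw [hrc k] at h
    have h' : (((2 * ((st i.val : ℤ) + 1) - ((st j.val : ℤ) + 1) - ((st k.val : ℤ) + 1)) : ℤ)
        : ZMod q) = 0 := by
      push_cast
      push_cast at h
      linear_combination h
    have hi := hA i; have hj := hA j; have hk := hA k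
    have hz := intzero _ h' (by rw [abs_lt]; constructor <;> push_cast <;> omega)
    have hst : st j.val + st k.val = 2 * st i.val := by omega
    have hjk := st_midpoint (j.val + k.val) j.val k.val i.val le_rfl hst
    have hsk : st j.val = st k.val := by rw [hjk]
    exact stinj i j (by omega)
  · -- star row condition
    intro i j h
    replace h : (0 : ZMod q) - (((st i.val + 1) : ℕ) : ZMod q)
        = ((2 * (st j.val + 1) : ℕ) : ZMod q) - (((st j.val + 1) : ℕ) : ZMod q) := h
    rw [hrc j] at h
    have h' : (((((st i.val : ℤ) + 1) + ((st j.val : ℤ) + 1)) : ℤ) : ZMod q) = 0 := by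
      push_cast
      push_cast at h
      linear_combination -h
    have hi := hA i; have hj := hA j
    have hz := intzero _ h' (by rw [abs_lt]; constructor <;> push_cast <;> omega)
    omega

set_option linter.unusedSectionVars false
open Finset Function

set_option linter.unusedSectionVars false
set_option linter.unusedVariables false
open Finset Function

section Base
variable {q g : ℕ} [NeZero q]

/-- base array -/
noncomputable def baseA (r c : Fin g → ZMod q) : ZMod q → ZMod q → Option (ZMod q) :=
  fun a b => if h : ∃ i, a - b = r i - c i then some (b - c h.choose) else none

variable {r c : Fin g → ZMod q}

lemma baseA_none_iff {a b : ZMod q} :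
    baseA r c a b = none ↔ ∀ i, a - b ≠ r i - c i := by
  unfold baseA
  split
  · simp only [reduceCtorEq, false_iff]; push_neg; assumption
  · simp only [true_iff]; push_neg at *; assumption

lemma baseA_some_iff (hd : Injective fun i => r i - c i) {a b v : ZMod q} :
    baseA r c a b = some v ↔ ∃ i, a = v + r i ∧ b = v + c i := by
  unfold baseA
  split
  · rename_i h
    have hspec := h.choose_spec
    simp only [Option.some.injEq]
    constructor
    · rintro rfl
      exact ⟨h.choose, by linear_combination hspec, by ring⟩
    · rintro ⟨i, rfl, rfl⟩
      have hi : i = h.choose := hd (show r i - c i = _ by linear_combination hspec)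
      rw [← hi]; ring
  · rename_i h
    push_neg at h
    simp only [reduceCtorEq, false_iff]
    rintro ⟨i, rfl, rfl⟩
    exact h i (by ring)

/-- each column has exactly `q - g` stars -/
lemma baseA_count_none (hd : Injective fun i => r i - c i) (b : ZMod q) :
    (univ.filter fun a : ZMod q => baseA r c a b = none).card = q - g := by
  have hsplit := Finset.card_filter_add_card_filter_not
    (s := (univ : Finset (ZMod q))) (p := fun a => baseA r c a b = none)
  have himg : (univ.filter fun a : ZMod q => ¬ baseA r c a b = none)
      = univ.image (fun i => b + (r i - c i)) := by
    ext a
    simp only [mem_filter, mem_univ, true_and, mem_image, baseA_none_iff]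
    push_neg
    constructor
    · rintro ⟨i, hi⟩; exact ⟨i, by rw [← hi]; ring⟩
    · rintro ⟨i, rfl⟩; exact ⟨i, by ring⟩
  have hcard : (univ.filter fun a : ZMod q => ¬ baseA r c a b = none).card = g := by
    rw [himg, Finset.card_image_of_injective _ (fun i j hij => hd
      (add_right_injective b (by exact hij : b + (r i - c i) = b + (r j - c j)))),
      Finset.card_univ, Fintype.card_fin]
  have hq : (univ : Finset (ZMod q)).card = q := by
    rw [Finset.card_univ, ZMod.card]
  omega

/-- each value occurs exactly `g` times -/
lemma baseA_count_some (hd : Injective fun i => r i - c i) (hc : Injective c) (v : ZMod q) :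
    (univ.filter fun x : ZMod q × ZMod q => baseA r c x.1 x.2 = some v).card = g := by
  have himg : (univ.filter fun x : ZMod q × ZMod q => baseA r c x.1 x.2 = some v)
      = univ.image (fun i => (v + r i, v + c i)) := by
    ext x
    simp only [mem_filter, mem_univ, true_and, mem_image, baseA_some_iff hd]
    constructor
    · rintro ⟨i, h1, h2⟩; exact ⟨i, by rw [Prod.ext_iff]; exact ⟨h1.symm, h2.symm⟩⟩
    · rintro ⟨i, rfl⟩; exact ⟨i, rfl, rfl⟩
  rw [himg, Finset.card_image_of_injective _ (fun i j hij => by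
      have := (Prod.ext_iff.mp hij).2
      exact hc (by simpa using this)),
    Finset.card_univ, Fintype.card_fin]

lemma baseA_pda (hd : Injective fun i => r i - c i) (hr : Injective r) (hc : Injective c)
    (h1 : ∀ i j k, r i - c j = r k - c k → i = j)
    {a1 b1 a2 b2 v : ZMod q} (H1 : baseA r c a1 b1 = some v) (H2 : baseA r c a2 b2 = some v)
    (hne : (a1, b1) ≠ (a2, b2)) : baseA r c a1 b2 = none := by
  rw [baseA_some_iff hd] at H1 H2
  obtain ⟨i, rfl, rfl⟩ := H1
  obtain ⟨j, rfl, rfl⟩ := H2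
  have hij : i ≠ j := by rintro rfl; exact hne rfl
  rw [baseA_none_iff]
  intro k hk
  exact hij (h1 i j k (by rw [← hk]; ring))

lemma baseA_star_row (hd : Injective fun i => r i - c i)
    (h0 : ∀ i j, (0 : ZMod q) - c i ≠ r j - c j)
    {a b v : ZMod q} (H : baseA r c a b = some v) : baseA r c v b = none := by
  rw [baseA_some_iff hd] at H
  obtain ⟨i, rfl, rfl⟩ := H
  rw [baseA_none_iff]
  intro j hj
  exact h0 i j (by rw [← hj]; ring)

end Base

-- generic counting helpers
lemma card_filter_equiv {α β : Type*} [Fintype α] [Fintype β] (e : α ≃ β) (p : β → Prop)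
    [DecidablePred p] :
    (univ.filter p).card = (univ.filter fun a => p (e a)).card := by
  refine Finset.card_bij' (fun b _ => e.symm b) (fun a _ => e a) ?_ ?_ ?_ ?_ <;>
    simp [Finset.mem_filter]

lemma card_filter_fst {α β : Type*} [Fintype α] [Fintype β] (p : α → Prop)
    [DecidablePred p] :
    ((univ : Finset (α × β)).filter fun x => p x.1).card
      = (univ.filter p).card * Fintype.card β := by
  have : ((univ : Finset (α × β)).filter fun x => p x.1) = (univ.filter p) ×ˢ univ := by
    ext x; simp [Finset.mem_product]
  rw [this, Finset.card_product, Finset.card_univ]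

section Prod
variable {m q g : ℕ} [NeZero q] {r c : Fin g → ZMod q}

noncomputable def prodP (r c : Fin g → ZMod q) (m : ℕ) :
    (Fin m → ZMod q) → Fin m × ZMod q → Option (Fin m → ZMod q) :=
  fun f k => (baseA r c (f k.1) k.2).map (fun v => Function.update f k.1 v)

lemma prodP_none_iff {f : Fin m → ZMod q} {i : Fin m} {b : ZMod q} :
    prodP r c m f (i, b) = none ↔ baseA r c (f i) b = none := Option.map_eq_none_iff

lemma prodP_some_iff {f s : Fin m → ZMod q} {i : Fin m} {b : ZMod q} :
    prodP r c m f (i, b) = some s ↔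
      baseA r c (f i) b = some (s i) ∧ ∀ j, j ≠ i → f j = s j := by
  unfold prodP
  rw [Option.map_eq_some_iff]
  constructor
  · rintro ⟨v, hv, rfl⟩
    refine ⟨by rwa [update_self], fun j hj => (update_of_ne hj _ _).symm⟩
  · rintro ⟨h1, h2⟩
    refine ⟨s i, h1, funext fun j => ?_⟩
    by_cases hj : j = i
    · subst hj; rw [update_self]
    · rw [update_of_ne hj, h2 j hj]

/-- number of stars in each column of the product PDA -/
lemma prodP_count_none (hd : Injective fun i => r i - c i) (i : Fin m) (b : ZMod q) :
    (univ.filter fun f : Fin m → ZMod q => prodP r c m f (i, b) = none).card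
      = (q - g) * q ^ (m - 1) := by
  refine (card_filter_equiv (Equiv.funSplitAt i (ZMod q)).symm _).trans ?_
  have hsimp : ∀ x : ZMod q × ({ j // j ≠ i } → ZMod q),
      (prodP r c m ((Equiv.funSplitAt i (ZMod q)).symm x) (i, b) = none)
        ↔ baseA r c x.1 b = none := by
    intro x
    rw [prodP_none_iff]
    have h : (Equiv.funSplitAt i (ZMod q)).symm x i = x.1 := by
      simp [Equiv.funSplitAt_symm_apply]
    rw [h]
  simp only [hsimp]
  refine (card_filter_fst (fun a : ZMod q => baseA r c a b = none)).trans ?_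
  rw [baseA_count_none hd b, Fintype.card_fun]
  congr 1
  rw [ZMod.card]
  congr 1
  rw [Fintype.card_subtype_compl, Fintype.card_subtype_eq, Fintype.card_fin]

/-- each value appears exactly `m * g` times in the product PDA -/
lemma prodP_count_some (hd : Injective fun i => r i - c i) (hc : Injective c)
    (s : Fin m → ZMod q) :
    (univ.filter fun x : (Fin m → ZMod q) × (Fin m × ZMod q) =>
        prodP r c m x.1 x.2 = some s).card = m * g := by
  rw [Finset.card_eq_sum_card_fiberwise
    (f := fun x : (Fin m → ZMod q) × (Fin m × ZMod q) => x.2.1)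
    (t := univ) (fun x _ => mem_univ _)]
  have hfiber : ∀ i : Fin m,
      ((univ.filter fun x : (Fin m → ZMod q) × (Fin m × ZMod q) =>
        prodP r c m x.1 x.2 = some s).filter fun x => x.2.1 = i).card = g := by
    intro i
    refine Finset.card_bij' (fun x _ => (x.1 i, x.2.2))
      (fun y _ => (Function.update s i y.1, (i, y.2)))
      ?_ ?_ ?_ ?_ |>.trans (baseA_count_some hd hc (s i))
    · rintro ⟨f, j, b⟩ hx
      simp only [mem_filter, mem_univ, true_and] at hx ⊢
      obtain ⟨h1, h2⟩ := hx
      subst h2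
      exact (prodP_some_iff.mp h1).1
    · rintro ⟨a, b⟩ hy
      simp only [mem_filter, mem_univ, true_and] at hy
      refine Finset.mem_filter.mpr ⟨Finset.mem_filter.mpr ⟨mem_univ _, ?_⟩, rfl⟩
      exact prodP_some_iff.mpr ⟨by simpa using hy, fun j hj => update_of_ne hj _ _⟩
    · rintro ⟨f, j, b⟩ hx
      simp only [mem_filter, mem_univ, true_and] at hx
      obtain ⟨h1, h2⟩ := hx
      subst h2
      obtain ⟨hA, hoff⟩ := prodP_some_iff.mp h1
      show (update s j (f j), (j, b)) = (f, (j, b))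
      have hu : update s j (f j) = f := by
        funext j'
        by_cases hj : j' = j
        · subst hj; rw [update_self]
        · rw [update_of_ne hj, hoff j' hj]
      rw [hu]
    · rintro ⟨a, b⟩ hy
      show (update s i a i, b) = (a, b)
      rw [update_self]
  rw [Finset.sum_congr rfl (fun i _ => hfiber i), Finset.sum_const, Finset.card_univ,
    Fintype.card_fin, smul_eq_mul]

end Prod

/-- Theorem 3 / Scheme B: for all positive integers `g` and `m`, there exists an
`(m·g)`-regular PDA with parameters
`(m(⌈g²/2⌉+g), (⌈g²/2⌉+g)^m, ⌈g²/2⌉·(⌈g²/2⌉+g)^(m-1), (⌈g²/2⌉+g)^m)`.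
Here `⌈g²/2⌉ = (g^2+1)/2` in natural-number arithmetic. -/
theorem multibs (g m : ℕ) (hg : 0 < g) (hm : 0 < m) :
    ∃ P : Fin (((g ^ 2 + 1) / 2 + g) ^ m) → Fin (m * ((g ^ 2 + 1) / 2 + g)) →
          Option (Fin (((g ^ 2 + 1) / 2 + g) ^ m)),
      IsPDA (m * ((g ^ 2 + 1) / 2 + g)) (((g ^ 2 + 1) / 2 + g) ^ m)
        ((g ^ 2 + 1) / 2 * ((g ^ 2 + 1) / 2 + g) ^ (m - 1))
        (((g ^ 2 + 1) / 2 + g) ^ m) P ∧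
      PDARegular (m * ((g ^ 2 + 1) / 2 + g)) (((g ^ 2 + 1) / 2 + g) ^ m)
        (((g ^ 2 + 1) / 2 + g) ^ m) (m * g) P := by
  obtain ⟨r, c, hr, hc, hr0, hd, h1, h0⟩ := exists_base g hg
  haveI : NeZero ((g ^ 2 + 1) / 2 + g) := ⟨by omega⟩
  have hcF : Fintype.card (Fin m → ZMod ((g ^ 2 + 1) / 2 + g)) = ((g ^ 2 + 1) / 2 + g) ^ m := by
    rw [Fintype.card_fun, ZMod.card, Fintype.card_fin]
  have hcK : Fintype.card (Fin m × ZMod ((g ^ 2 + 1) / 2 + g)) = m * ((g ^ 2 + 1) / 2 + g) := by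
    rw [Fintype.card_prod, ZMod.card, Fintype.card_fin]
  set eF := Fintype.equivFinOfCardEq hcF with heF
  set eK := Fintype.equivFinOfCardEq hcK with heK
  refine ⟨fun j k => Option.map eF (prodP r c m (eF.symm j) (eK.symm k)), ⟨?_, ?_, ?_⟩, ?_⟩
  · -- C1 : stars per column
    intro k
    obtain ⟨⟨i, b⟩, hκ⟩ : ∃ p, eK.symm k = p := ⟨_, rfl⟩
    refine (card_filter_equiv eF _).trans ?_
    have hpred : ∀ f : Fin m → ZMod ((g ^ 2 + 1) / 2 + g),
        (Option.map eF (prodP r c m (eF.symm (eF f)) (eK.symm k)) = none)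
          ↔ prodP r c m f (i, b) = none := by
      intro f
      rw [Equiv.symm_apply_apply, hκ, Option.map_eq_none_iff]
    simp only [hpred]
    have := prodP_count_none (m := m) hd i b
    rw [this, Nat.add_sub_cancel]
  · -- C2 : all values appear
    intro s
    have hbase : baseA r c (eF.symm s ⟨0, hm⟩ + r ⟨0, hg⟩) (eF.symm s ⟨0, hm⟩ + c ⟨0, hg⟩)
        = some (eF.symm s ⟨0, hm⟩) := (baseA_some_iff hd).mpr ⟨⟨0, hg⟩, rfl, rfl⟩
    have hP : prodP r c m
        (Function.update (eF.symm s) ⟨0, hm⟩ (eF.symm s ⟨0, hm⟩ + r ⟨0, hg⟩))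
        (⟨0, hm⟩, eF.symm s ⟨0, hm⟩ + c ⟨0, hg⟩) = some (eF.symm s) :=
      prodP_some_iff.mpr ⟨by rwa [Function.update_self],
        fun j hj => Function.update_of_ne hj _ _⟩
    refine ⟨eF (Function.update (eF.symm s) ⟨0, hm⟩ (eF.symm s ⟨0, hm⟩ + r ⟨0, hg⟩)),
      eK (⟨0, hm⟩, eF.symm s ⟨0, hm⟩ + c ⟨0, hg⟩), ?_⟩
    beta_reduce
    rw [Equiv.symm_apply_apply, Equiv.symm_apply_apply, hP, Option.map_some,
      Equiv.apply_symm_apply]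
  · -- C3
    intro j1 j2 k1 k2 s hP1 hP2 hne
    obtain ⟨⟨i1, b1⟩, hκ1⟩ : ∃ p, eK.symm k1 = p := ⟨_, rfl⟩
    obtain ⟨⟨i2, b2⟩, hκ2⟩ : ∃ p, eK.symm k2 = p := ⟨_, rfl⟩
    beta_reduce at hP1 hP2 ⊢
    rw [hκ1] at hP1
    rw [hκ2] at hP2
    obtain ⟨s1, hs1, hes1⟩ := Option.map_eq_some_iff.mp hP1
    obtain ⟨s2, hs2, hes2⟩ := Option.map_eq_some_iff.mp hP2
    have hs1' : s1 = eF.symm s := by rw [← hes1, Equiv.symm_apply_apply]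
    have hs2' : s2 = eF.symm s := by rw [← hes2, Equiv.symm_apply_apply]
    subst hs1'; subst hs2'
    obtain ⟨hA1, hoff1⟩ := prodP_some_iff.mp hs1
    obtain ⟨hA2, hoff2⟩ := prodP_some_iff.mp hs2
    by_cases hii : i1 = i2
    · subst hii
      have hpairne : (eF.symm j1 i1, b1) ≠ (eF.symm j2 i1, b2) := by
        intro hpe
        have hab : eF.symm j1 i1 = eF.symm j2 i1 := congrArg Prod.fst hpe
        have hbb : b1 = b2 := congrArg Prod.snd hpe
        have h12 : eF.symm j1 = eF.symm j2 := funext fun j => by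
          by_cases hj : j = i1
          · subst hj; exact hab
          · rw [hoff1 j hj, hoff2 j hj]
        apply hne
        have hk : k1 = k2 := eK.symm.injective (by rw [hκ1, hκ2, hbb])
        have hj : j1 = j2 := eF.symm.injective h12
        rw [hj, hk]
      constructor
      · rw [hκ2, Option.map_eq_none_iff, prodP_none_iff]
        exact baseA_pda hd hr hc h1 hA1 hA2 hpairne
      · rw [hκ1, Option.map_eq_none_iff, prodP_none_iff]
        exact baseA_pda hd hr hc h1 hA2 hA1 (Ne.symm hpairne)
    · constructor
      · rw [hκ2, Option.map_eq_none_iff, prodP_none_iff]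
        rw [hoff1 i2 (fun h => hii h.symm)]
        exact baseA_star_row hd h0 hA2
      · rw [hκ1, Option.map_eq_none_iff, prodP_none_iff]
        rw [hoff2 i1 hii]
        exact baseA_star_row hd h0 hA1
  · -- regularity
    intro s
    refine (card_filter_equiv (Equiv.prodCongr eF eK) _).trans ?_
    have hpred : ∀ x : (Fin m → ZMod ((g ^ 2 + 1) / 2 + g))
        × (Fin m × ZMod ((g ^ 2 + 1) / 2 + g)),
        (Option.map eF (prodP r c m (eF.symm ((Equiv.prodCongr eF eK) x).1)
            (eK.symm ((Equiv.prodCongr eF eK) x).2)) = some s)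
          ↔ prodP r c m x.1 x.2 = some (eF.symm s) := by
      intro x
      rw [Equiv.prodCongr_apply, Prod.map_fst, Prod.map_snd,
        Equiv.symm_apply_apply, Equiv.symm_apply_apply]
      constructor
      · intro h
        obtain ⟨y, hy, hey⟩ := Option.map_eq_some_iff.mp h
        rwa [show y = eF.symm s by rw [← hey, Equiv.symm_apply_apply]] at hy
      · intro h
        rw [h, Option.map_some, Equiv.apply_symm_apply]
    simp only [hpred]
    exact prodP_count_some hd hc (eF.symm s)
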